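/- Let k, k' be finite fields of characteristic p and let u ∈ k ⊗_{𝔽_p} k' satisfy (Frob ⊗ id)(u) = u, where Frob is the p-power Frobenius of k. Then u ∈ 𝔽_p ⊗_{𝔽_p} k' ≅ k'. Consequently, an element of a finite tensor product ⊗_{α,𝔽_p} 𝔽_{q_α} fixed by each partial Frobenius lies in 𝔽_p. -/

import Mathlib

set_option linter.unusedSectionVars false
set_option maxHeartbeats 1000000

open scoped TensorProduct Classical
open PiTensorProduct

section FixedPoint

variable {p : ℕ} [Fact p.Prime]

/-- In a finite field of characteristic `p`, a fixed point of Frobenius lies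
in the prime field. -/
lemma frob_fixed_point {k : Type*} [Field k] [Finite k] [Algebra (ZMod p) k]
    (x : k) (hx : x ^ p = x) : ∃ c : ZMod p, algebraMap (ZMod p) k c = x := by
  classical
  have hp : 1 < p := (Fact.out : p.Prime).one_lt
  haveI := Fintype.ofFinite k
  set f : Polynomial k := Polynomial.X ^ p - Polynomial.X with hf
  have hf0 : f ≠ 0 := FiniteField.X_pow_card_sub_X_ne_zero k hp
  have hdeg : f.natDegree = p := FiniteField.X_pow_card_sub_X_natDegree_eq k hp
  have hroot : ∀ y : k, y ^ p = y → y ∈ f.roots := by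
    intro y hy
    rw [Polynomial.mem_roots hf0]
    simp [hf, Polynomial.IsRoot, hy]
  set S : Finset k := Finset.image (algebraMap (ZMod p) k) Finset.univ with hS
  have hcard : S.card = p := by
    rw [Finset.card_image_of_injective _ (algebraMap (ZMod p) k).injective]
    simp [ZMod.card]
  have hsub : S ⊆ f.roots.toFinset := by
    intro y hy
    simp only [hS, Finset.mem_image] at hy
    obtain ⟨c, -, rfl⟩ := hy
    rw [Multiset.mem_toFinset]
    apply hroot
    rw [← map_pow, ZMod.pow_card]
  have hle : f.roots.toFinset.card ≤ S.card := by
    rw [hcard]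
    calc f.roots.toFinset.card ≤ Multiset.card f.roots := f.roots.toFinset_card_le
    _ ≤ f.natDegree := f.card_roots'
    _ = p := hdeg
  have heq : S = f.roots.toFinset := Finset.eq_of_subset_of_card_le hsub hle
  have hxS : x ∈ S := by rw [heq, Multiset.mem_toFinset]; exact hroot x hx
  simp only [hS, Finset.mem_image] at hxS
  obtain ⟨c, -, hc⟩ := hxS
  exact ⟨c, hc⟩

/-- The key linear-algebra lemma: an element of `k ⊗ V` fixed by `Frob ⊗ id` is of
the form `1 ⊗ v`. -/
lemma lemmaA {k : Type*} [Field k] [Finite k] [Algebra (ZMod p) k]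
    {V : Type*} [AddCommGroup V] [Module (ZMod p) V]
    (F : k ⊗[ZMod p] V →+ k ⊗[ZMod p] V)
    (hF : ∀ (a : k) (v : V), F (a ⊗ₜ[ZMod p] v) = (a ^ p) ⊗ₜ[ZMod p] v)
    (u : k ⊗[ZMod p] V) (hu : F u = u) :
    ∃ v : V, u = (1 : k) ⊗ₜ[ZMod p] v := by
  classical
  let b := Module.Free.chooseBasis (ZMod p) V
  set ι := Module.Free.ChooseBasisIndex (ZMod p) V
  let b' := b.baseChange k
  set g := b'.repr u with hg
  set s := g.support with hs
  have h1 : u = ∑ i ∈ s, (g i) ⊗ₜ[ZMod p] (b i) := by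
    conv_lhs => rw [← b'.linearCombination_repr u]
    rw [Finsupp.linearCombination_apply, Finsupp.sum]
    refine Finset.sum_congr rfl fun i _ => ?_
    rw [Module.Basis.baseChange_apply, TensorProduct.smul_tmul', smul_eq_mul, mul_one]
  have h2 : u = ∑ i ∈ s, (g i ^ p) ⊗ₜ[ZMod p] (b i) := by
    conv_lhs => rw [← hu, h1]
    rw [map_sum]
    exact Finset.sum_congr rfl fun i _ => hF _ _
  have h3 : ∑ i ∈ s, (g i ^ p - g i) • b' i = 0 := by
    have : ∀ i, (g i ^ p - g i) • b' i
        = (g i ^ p) ⊗ₜ[ZMod p] (b i) - (g i) ⊗ₜ[ZMod p] (b i) := by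
      intro i
      rw [Module.Basis.baseChange_apply, TensorProduct.smul_tmul', smul_eq_mul, mul_one,
        TensorProduct.sub_tmul]
    simp_rw [this]
    rw [Finset.sum_sub_distrib, ← h2, ← h1, sub_self]
  have h4 : ∀ j ∈ s, g j ^ p = g j := by
    intro j hj
    have := linearIndependent_iff'.mp b'.linearIndependent s _ h3 j hj
    exact sub_eq_zero.mp this
  have hc : ∀ j : ι, ∃ c : ZMod p, algebraMap (ZMod p) k c = g j := by
    intro j
    by_cases hj : j ∈ s
    · exact frob_fixed_point _ (h4 j hj)
    · exact ⟨0, by simp [Finsupp.notMem_support_iff.mp (by simpa [hs] using hj)]⟩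
  choose c hcc using hc
  refine ⟨∑ j ∈ s, c j • b j, ?_⟩
  rw [TensorProduct.tmul_sum]
  rw [h1]
  refine Finset.sum_congr rfl fun j _ => ?_
  rw [← hcc j, TensorProduct.tmul_smul, TensorProduct.smul_tmul', Algebra.smul_def, mul_one]

/-- An additive map between `ZMod p`-modules is automatically linear. -/
def addToLin {M N : Type*} [AddCommGroup M] [AddCommGroup N]
    [Module (ZMod p) M] [Module (ZMod p) N] (f : M → N)
    (h : ∀ x y, f (x + y) = f x + f y) : M →ₗ[ZMod p] N where
  toFun := f
  map_add' := h
  map_smul' := by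
    haveI : NeZero p := ⟨(Fact.out : p.Prime).ne_zero⟩
    intro c x
    obtain ⟨m, rfl⟩ := ZMod.natCast_zmod_surjective c
    simp only [RingHom.id_apply]
    rw [Nat.cast_smul_eq_nsmul, Nat.cast_smul_eq_nsmul]
    exact (AddMonoidHom.mk' f h).map_nsmul m x

/-- Frobenius as a `ZMod p`-linear map. -/
noncomputable def frL (k : Type*) [Field k] [Algebra (ZMod p) k] : k →ₗ[ZMod p] k where
  toFun x := x ^ p
  map_add' := by
    haveI : CharP k p := charP_of_injective_algebraMap (algebraMap (ZMod p) k).injective p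
    intro x y
    exact add_pow_char x y p
  map_smul' := by
    intro c x
    simp only [RingHom.id_apply, smul_pow]
    rw [ZMod.pow_card]

end FixedPoint

section Split

variable (p : ℕ) [Fact p.Prime]
variable {ι : Type} [Fintype ι] (K : ι → Type) [∀ i, Field (K i)]
  [∀ i, Finite (K i)] [∀ i, Algebra (ZMod p) (K i)] (α₀ : ι)

/-- Extend a family on the complement of `α₀` by placing `a` at `α₀`. -/
noncomputable def extFun (a : K α₀) (y : ∀ j : {i : ι // i ≠ α₀}, K j.val) : ∀ i, K i :=
  fun i => if h : i = α₀ then cast (congrArg K h).symm a else y ⟨i, h⟩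

lemma extFun_at (a : K α₀) (y : ∀ j : {i : ι // i ≠ α₀}, K j.val) :
    extFun K α₀ a y α₀ = a := by
  simp [extFun]

lemma extFun_val (a : K α₀) (y : ∀ j : {i : ι // i ≠ α₀}, K j.val)
    (j : {i : ι // i ≠ α₀}) : extFun K α₀ a y j.val = y j := by
  simp only [extFun, dif_neg j.prop]

lemma extFun_update_at [DecidableEq ι] (a b : K α₀) (y : ∀ j : {i : ι // i ≠ α₀}, K j.val) :
    Function.update (extFun K α₀ a y) α₀ b = extFun K α₀ b y := by
  funext i
  by_cases h : i = α₀
  · subst h; simp [extFun]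
  · rw [Function.update_of_ne h]
    simp only [extFun, dif_neg h]

lemma extFun_update_ne [DecidableEq ι] [DecidableEq {i : ι // i ≠ α₀}]
    (a : K α₀) (y : ∀ j : {i : ι // i ≠ α₀}, K j.val)
    (j : {i : ι // i ≠ α₀}) (v : K j.val) :
    Function.update (extFun K α₀ a y) j.val v = extFun K α₀ a (Function.update y j v) := by
  funext i
  by_cases h2 : i = α₀
  · subst h2
    rw [Function.update_of_ne (fun hh => j.prop hh.symm)]
    rw [extFun_at, extFun_at]
  · by_cases h : i = j.val
    · subst h
      simp only [Function.update_self, extFun, dif_neg h2]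
    · rw [Function.update_of_ne h]
      simp only [extFun, dif_neg h2]
      rw [Function.update_of_ne (fun hh => h (by simpa using congrArg Subtype.val hh))]

lemma extFun_self (x : ∀ i, K i) :
    extFun K α₀ (x α₀) (fun j => x j.val) = x := by
  funext i
  by_cases h : i = α₀
  · subst h; simp [extFun]
  · simp only [extFun, dif_neg h]

lemma tprod_extFun_add (a a' : K α₀) (y : ∀ j : {i : ι // i ≠ α₀}, K j.val) :
    tprod (ZMod p) (extFun K α₀ (a + a') y)
      = tprod (ZMod p) (extFun K α₀ a y) + tprod (ZMod p) (extFun K α₀ a' y) := by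
  rw [← extFun_update_at K α₀ a (a + a') y, MultilinearMap.map_update_add,
    extFun_update_at, extFun_update_at]

lemma tprod_extFun_smul (c : ZMod p) (a : K α₀) (y : ∀ j : {i : ι // i ≠ α₀}, K j.val) :
    tprod (ZMod p) (extFun K α₀ (c • a) y)
      = c • tprod (ZMod p) (extFun K α₀ a y) := by
  rw [← extFun_update_at K α₀ a (c • a) y, MultilinearMap.map_update_smul,
    extFun_update_at]

/-- The splitting multilinear map. -/
noncomputable def splitM :
    MultilinearMap (ZMod p) K
      (K α₀ ⊗[ZMod p] (⨂[ZMod p] j : {i : ι // i ≠ α₀}, K j.val)) where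
  toFun x := x α₀ ⊗ₜ[ZMod p] tprod (ZMod p) (fun j => x j.val)
  map_update_add' := by
    intro dec x i a b
    by_cases h : i = α₀
    · subst h
      have h1 : ∀ (v : K i), Function.update x i v i = v := fun v => by simp
      have h2 : ∀ (v : K i) (j : {i' : ι // i' ≠ i}),
          Function.update x i v j.val = x j.val := fun v j => by
        rw [Function.update_of_ne j.prop]
      simp only [h1, h2]
      rw [TensorProduct.add_tmul]
    · have h1 : ∀ (v : K i), Function.update x i v α₀ = x α₀ := fun v => by
        rw [Function.update_of_ne (fun hh => h hh.symm)]
      have h2 : ∀ (v : K i),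
          (fun j : {i' : ι // i' ≠ α₀} => Function.update x i v j.val)
            = Function.update (fun j : {i' : ι // i' ≠ α₀} => x j.val) ⟨i, h⟩ v := by
        intro v
        funext j
        by_cases hj : j = (⟨i, h⟩ : {i' : ι // i' ≠ α₀})
        · subst hj; simp
        · rw [Function.update_of_ne (fun hh => hj (Subtype.ext hh)),
            Function.update_of_ne hj]
      simp only [h1, h2]
      rw [MultilinearMap.map_update_add, TensorProduct.tmul_add]
  map_update_smul' := by
    intro dec x i c a
    by_cases h : i = α₀
    · subst h
      have h1 : ∀ (v : K i), Function.update x i v i = v := fun v => by simp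
      have h2 : ∀ (v : K i) (j : {i' : ι // i' ≠ i}),
          Function.update x i v j.val = x j.val := fun v j => by
        rw [Function.update_of_ne j.prop]
      simp only [h1, h2]
      rw [TensorProduct.smul_tmul']
    · have h1 : ∀ (v : K i), Function.update x i v α₀ = x α₀ := fun v => by
        rw [Function.update_of_ne (fun hh => h hh.symm)]
      have h2 : ∀ (v : K i),
          (fun j : {i' : ι // i' ≠ α₀} => Function.update x i v j.val)
            = Function.update (fun j : {i' : ι // i' ≠ α₀} => x j.val) ⟨i, h⟩ v := by
        intro v
        funext j
        by_cases hj : j = (⟨i, h⟩ : {i' : ι // i' ≠ α₀})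
        · subst hj; simp
        · rw [Function.update_of_ne (fun hh => hj (Subtype.ext hh)),
            Function.update_of_ne hj]
      simp only [h1, h2]
      rw [(tprod (ZMod p) (s := fun j : {i' : ι // i' ≠ α₀} => K j.val)).map_update_smul,
        TensorProduct.tmul_smul]

/-- The forward linear map. -/
noncomputable def φlin :
    (⨂[ZMod p] i, K i) →ₗ[ZMod p]
      (K α₀ ⊗[ZMod p] (⨂[ZMod p] j : {i : ι // i ≠ α₀}, K j.val)) :=
  PiTensorProduct.lift (splitM p K α₀)

@[simp] lemma φlin_tprod (x : ∀ i, K i) :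
    φlin p K α₀ (tprod (ZMod p) x)
      = x α₀ ⊗ₜ[ZMod p] tprod (ZMod p) (fun j : {i : ι // i ≠ α₀} => x j.val) := by
  simp [φlin, splitM]

/-- The backward multilinear map at `a`. -/
noncomputable def backM (a : K α₀) :
    MultilinearMap (ZMod p) (fun j : {i : ι // i ≠ α₀} => K j.val) (⨂[ZMod p] i, K i) where
  toFun y := tprod (ZMod p) (extFun K α₀ a y)
  map_update_add' := by
    intro dec y j u v
    rw [← extFun_update_ne, ← extFun_update_ne, ← extFun_update_ne,
      MultilinearMap.map_update_add]
  map_update_smul' := by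
    intro dec y j c u
    rw [← extFun_update_ne, ← extFun_update_ne, MultilinearMap.map_update_smul]

/-- The backward linear map. -/
noncomputable def ψlin :
    (K α₀ ⊗[ZMod p] (⨂[ZMod p] j : {i : ι // i ≠ α₀}, K j.val)) →ₗ[ZMod p]
      (⨂[ZMod p] i, K i) :=
  TensorProduct.lift
    { toFun := fun a => PiTensorProduct.lift (backM p K α₀ a)
      map_add' := by
        intro a a'
        show PiTensorProduct.lift (backM p K α₀ (a + a'))
          = PiTensorProduct.lift (backM p K α₀ a) + PiTensorProduct.lift (backM p K α₀ a')
        apply PiTensorProduct.ext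
        apply MultilinearMap.ext
        intro y
        simp only [LinearMap.compMultilinearMap_apply, LinearMap.add_apply,
          PiTensorProduct.lift.tprod]
        show tprod (ZMod p) (extFun K α₀ (a + a') y) = _
        rw [tprod_extFun_add p K α₀ a a' y]
        rfl
      map_smul' := by
        intro c a
        show PiTensorProduct.lift (backM p K α₀ (c • a))
          = c • PiTensorProduct.lift (backM p K α₀ a)
        apply PiTensorProduct.ext
        apply MultilinearMap.ext
        intro y
        simp only [LinearMap.compMultilinearMap_apply,
          LinearMap.smul_apply, PiTensorProduct.lift.tprod]
        show tprod (ZMod p) (extFun K α₀ (c • a) y) = _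
        rw [tprod_extFun_smul p K α₀ c a y]
        rfl }

@[simp] lemma ψlin_tmul (a : K α₀) (y : ∀ j : {i : ι // i ≠ α₀}, K j.val) :
    ψlin p K α₀ (a ⊗ₜ[ZMod p] tprod (ZMod p) y) = tprod (ZMod p) (extFun K α₀ a y) := by
  simp [ψlin, backM]

lemma ψφ (u : ⨂[ZMod p] i, K i) : ψlin p K α₀ (φlin p K α₀ u) = u := by
  have : (ψlin p K α₀).comp (φlin p K α₀) = LinearMap.id := by
    apply PiTensorProduct.ext
    apply MultilinearMap.ext
    intro x
    simp only [LinearMap.compMultilinearMap_apply, LinearMap.coe_comp, Function.comp_apply,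
      LinearMap.id_coe, id_eq, φlin_tprod, ψlin_tmul, extFun_self]
  exact DFunLike.congr_fun this u

lemma φψ (z : K α₀ ⊗[ZMod p] (⨂[ZMod p] j : {i : ι // i ≠ α₀}, K j.val)) :
    φlin p K α₀ (ψlin p K α₀ z) = z := by
  have : (φlin p K α₀).comp (ψlin p K α₀) = LinearMap.id := by
    apply TensorProduct.ext
    apply LinearMap.ext
    intro a
    apply PiTensorProduct.ext
    apply MultilinearMap.ext
    intro y
    simp only [LinearMap.compMultilinearMap_apply, LinearMap.compr₂_apply, LinearMap.compr₂ₛₗ_apply,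
      TensorProduct.mk_apply, LinearMap.coe_comp, Function.comp_apply, LinearMap.id_coe, id_eq,
      ψlin_tmul, φlin_tprod, extFun_at]
    rw [show (fun j : {i : ι // i ≠ α₀} => extFun K α₀ a y j.val) = y
      from funext fun j => extFun_val K α₀ a y j]
  exact DFunLike.congr_fun this z

end Split

section Main

variable {p : ℕ} [Fact p.Prime]

lemma part2_aux (n : ℕ) :
    ∀ (ι : Type) [Fintype ι], Fintype.card ι = n →
    ∀ (K : ι → Type) [∀ i, Field (K i)] [∀ i, Finite (K i)] [∀ i, Algebra (ZMod p) (K i)]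
      (F : ι → ((⨂[ZMod p] i, K i) → (⨂[ZMod p] i, K i))),
      (∀ α x y, F α (x + y) = F α x + F α y) →
      (∀ α x, F α (tprod (ZMod p) x) = tprod (ZMod p) (Function.update x α ((x α) ^ p))) →
      ∀ u, (∀ α, F α u = u) → ∃ c : ZMod p, u = algebraMap (ZMod p) (⨂[ZMod p] i, K i) c := by
  induction n with
  | zero =>
    intro ι _ hcard K _ _ _ F hadd htp u hu
    haveI : IsEmpty ι := Fintype.card_eq_zero_iff.mp hcard
    set e := PiTensorProduct.isEmptyEquiv (R := ZMod p) (s := K) ι with he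
    refine ⟨e u, ?_⟩
    have h2 : (tprod (ZMod p) (isEmptyElim : ∀ i : ι, K i)) = (1 : ⨂[ZMod p] i, K i) := by
      rw [PiTensorProduct.one_def]
      exact congrArg _ (Subsingleton.elim _ _)
    rw [Algebra.algebraMap_eq_smul_one, ← h2]
    conv_lhs => rw [← e.symm_apply_apply u]
    rw [he, PiTensorProduct.isEmptyEquiv_symm_apply]
  | succ n ih =>
    intro ι _ hcard K _ _ _ F hadd htp u hu
    have hne : Nonempty ι := Fintype.card_pos_iff.mp (by omega)
    obtain ⟨α₀⟩ := hne
    classical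
    -- the linear versions of F
    let Fl : ι → ((⨂[ZMod p] i, K i) →ₗ[ZMod p] (⨂[ZMod p] i, K i)) :=
      fun α => addToLin (F α) (hadd α)
    have hFl : ∀ α x, Fl α x = F α x := fun α x => rfl
    -- conjugated Frobenius on K α₀ ⊗ W
    let F' := ((φlin p K α₀).comp ((Fl α₀).comp (ψlin p K α₀))).toAddMonoidHom
    have hF' : ∀ (a : K α₀) (w : ⨂[ZMod p] j : {i : ι // i ≠ α₀}, K j.val),
        F' (a ⊗ₜ[ZMod p] w) = (a ^ p) ⊗ₜ[ZMod p] w := by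
      intro a w
      have hcomp : ((φlin p K α₀).comp ((Fl α₀).comp (ψlin p K α₀))).comp
            (TensorProduct.mk (ZMod p) _ _ a)
          = TensorProduct.mk (ZMod p) _ _ (a ^ p) := by
        apply PiTensorProduct.ext
        apply MultilinearMap.ext
        intro y
        simp only [LinearMap.compMultilinearMap_apply, LinearMap.coe_comp, Function.comp_apply,
          TensorProduct.mk_apply, ψlin_tmul]
        show φlin p K α₀ (F α₀ (tprod (ZMod p) (extFun K α₀ a y))) = _
        rw [htp α₀, extFun_at, extFun_update_at, φlin_tprod, extFun_at,
          show (fun j : {i : ι // i ≠ α₀} => extFun K α₀ (a ^ p) y j.val) = y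
            from funext fun j => extFun_val K α₀ (a ^ p) y j]
      exact DFunLike.congr_fun hcomp w
    have hfix : F' (φlin p K α₀ u) = φlin p K α₀ u := by
      show φlin p K α₀ (Fl α₀ (ψlin p K α₀ (φlin p K α₀ u))) = _
      rw [ψφ p K α₀ u, hFl, hu α₀]
    obtain ⟨w₀, hw₀⟩ := lemmaA F' hF' (φlin p K α₀ u) hfix
    have hu' : u = ψlin p K α₀ ((1 : K α₀) ⊗ₜ[ZMod p] w₀) := by
      rw [← hw₀, ψφ]
    -- the partial Frobenii on the smaller tensor product
    let G : ∀ _ : {i : ι // i ≠ α₀},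
        ((⨂[ZMod p] j : {i : ι // i ≠ α₀}, K j.val) →ₗ[ZMod p]
          (⨂[ZMod p] j : {i : ι // i ≠ α₀}, K j.val)) :=
      fun α' => PiTensorProduct.map
        (fun j => if j = α' then frL (K j.val) else LinearMap.id)
    have hG : ∀ (inst : DecidableEq {i : ι // i ≠ α₀})
        (α' : {i : ι // i ≠ α₀}) (y : ∀ j : {i : ι // i ≠ α₀}, K j.val),
        G α' (tprod (ZMod p) y)
          = tprod (ZMod p) (@Function.update _ _ inst y α' ((y α') ^ p)) := by
      intro inst α' y
      show PiTensorProduct.map _ (tprod (ZMod p) y) = _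
      rw [PiTensorProduct.map_tprod]
      congr 1
      funext j
      by_cases hj : j = α'
      · subst hj
        simp only [if_pos rfl, Function.update_self]
        rfl
      · simp only [if_neg hj, Function.update_of_ne hj, LinearMap.id_coe, id_eq]
    -- commutation of F with ψlin
    have hcomm : ∀ (α' : {i : ι // i ≠ α₀}) (a : K α₀)
        (w : ⨂[ZMod p] j : {i : ι // i ≠ α₀}, K j.val),
        F α'.val (ψlin p K α₀ (a ⊗ₜ[ZMod p] w))
          = ψlin p K α₀ (a ⊗ₜ[ZMod p] (G α' w)) := by
      intro α' a w
      have hcomp : ((Fl α'.val).comp ((ψlin p K α₀).comp (TensorProduct.mk (ZMod p) _ _ a)))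
          = ((ψlin p K α₀).comp (TensorProduct.mk (ZMod p) _ _ a)).comp (G α') := by
        apply PiTensorProduct.ext
        apply MultilinearMap.ext
        intro y
        simp only [LinearMap.compMultilinearMap_apply, LinearMap.coe_comp, Function.comp_apply,
          TensorProduct.mk_apply, ψlin_tmul]
        rw [hG _ α' y, ψlin_tmul]
        show F α'.val (tprod (ZMod p) (extFun K α₀ a y)) = _
        rw [htp, ← extFun_update_ne, extFun_val]
      exact DFunLike.congr_fun hcomp w
    -- injectivity of w ↦ 1 ⊗ w
    have hinj : ∀ (w w' : ⨂[ZMod p] j : {i : ι // i ≠ α₀}, K j.val),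
        (1 : K α₀) ⊗ₜ[ZMod p] w = (1 : K α₀) ⊗ₜ[ZMod p] w' → w = w' := by
      intro w w' hww
      have h1 : Function.Injective
          (LinearMap.rTensor (⨂[ZMod p] j : {i : ι // i ≠ α₀}, K j.val)
            (Algebra.linearMap (ZMod p) (K α₀))) :=
        Module.Flat.rTensor_preserves_injective_linearMap _
          (fun x y hxy => (algebraMap (ZMod p) (K α₀)).injective hxy)
      have h2 : (LinearMap.rTensor _ (Algebra.linearMap (ZMod p) (K α₀)))
            ((TensorProduct.lid (ZMod p) _).symm w)
          = (LinearMap.rTensor _ (Algebra.linearMap (ZMod p) (K α₀)))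
            ((TensorProduct.lid (ZMod p) _).symm w') := by
        simp only [TensorProduct.lid_symm_apply, LinearMap.rTensor_tmul,
          Algebra.linearMap_apply, _root_.map_one]
        exact hww
      exact (TensorProduct.lid (ZMod p) _).symm.injective (h1 h2)
    have hGfix : ∀ α' : {i : ι // i ≠ α₀}, G α' w₀ = w₀ := by
      intro α'
      have h2 : ψlin p K α₀ ((1 : K α₀) ⊗ₜ[ZMod p] G α' w₀)
          = ψlin p K α₀ ((1 : K α₀) ⊗ₜ[ZMod p] w₀) := by
        calc ψlin p K α₀ ((1 : K α₀) ⊗ₜ[ZMod p] G α' w₀)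
            = F α'.val (ψlin p K α₀ ((1 : K α₀) ⊗ₜ[ZMod p] w₀)) := (hcomm α' 1 w₀).symm
          _ = F α'.val u := by rw [← hu']
          _ = u := hu α'.val
          _ = ψlin p K α₀ ((1 : K α₀) ⊗ₜ[ZMod p] w₀) := hu'
      have h3 := congrArg (φlin p K α₀) h2
      rw [φψ, φψ] at h3
      exact hinj _ _ h3
    have hcard' : Fintype.card {i : ι // i ≠ α₀} = n := by
      have h5 : Fintype.card {i : ι // i ≠ α₀}
          = Fintype.card ι - Fintype.card {i : ι // i = α₀} :=
        Fintype.card_subtype_compl (fun i => i = α₀)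
      rw [Fintype.card_subtype_eq] at h5
      omega
    obtain ⟨c, hc⟩ := ih {i : ι // i ≠ α₀} hcard' (fun j => K j.val)
      (fun α' => G α') (fun α' x y => (G α').map_add x y) (fun α' y => hG _ α' y) w₀ hGfix
    refine ⟨c, ?_⟩
    rw [hu', hc, Algebra.algebraMap_eq_smul_one, TensorProduct.tmul_smul, map_smul,
      Algebra.algebraMap_eq_smul_one]
    congr 1
    rw [PiTensorProduct.one_def, ψlin_tmul, PiTensorProduct.one_def]
    refine congrArg _ (funext fun i => ?_)
    by_cases h : i = α₀
    · subst h; rw [extFun_at]; rfl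
    · simpa using extFun_val K α₀ (1 : K α₀) (1 : ∀ j : {i : ι // i ≠ α₀}, K j.val) ⟨i, h⟩

end Main

/-- Let `k, k'` be finite fields of characteristic `p` and let
`u ∈ k ⊗_{𝔽_p} k'` satisfy `(Frob ⊗ id)(u) = u`, where `Frob` is the `p`-power Frobenius
of `k`.  Then `u ∈ 𝔽_p ⊗_{𝔽_p} k' ≅ k'`.  Consequently, an element of a finite tensor
product `⊗_{α, 𝔽_p} 𝔽_{q_α}` fixed by each partial Frobenius lies in `𝔽_p`. -/
theorem statement_11 (p : ℕ) [Fact p.Prime]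
    (k k' : Type) [Field k] [Field k'] [Finite k] [Finite k']
    [Algebra (ZMod p) k] [Algebra (ZMod p) k'] :
    (∀ F : k ⊗[ZMod p] k' →+* k ⊗[ZMod p] k',
      (∀ (a : k) (b : k'), F (a ⊗ₜ[ZMod p] b) = (a ^ p) ⊗ₜ[ZMod p] b) →
      ∀ u : k ⊗[ZMod p] k', F u = u → ∃ b : k', u = (1 : k) ⊗ₜ[ZMod p] b)
    ∧
    (∀ (ι : Type) (_ : Fintype ι) (K : ι → Type)
      (_ : ∀ i, Field (K i)) (_ : ∀ i, Finite (K i)) (_ : ∀ i, Algebra (ZMod p) (K i))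
      (F : ∀ _ : ι, (⨂[ZMod p] i, K i) →+* (⨂[ZMod p] i, K i)),
      (∀ (α : ι) (x : ∀ i, K i),
        F α (PiTensorProduct.tprod (ZMod p) x) =
          PiTensorProduct.tprod (ZMod p) (Function.update x α ((x α) ^ p))) →
      ∀ u : ⨂[ZMod p] i, K i, (∀ α, F α u = u) →
        ∃ c : ZMod p, u = algebraMap (ZMod p) (⨂[ZMod p] i, K i) c) := by
  constructor
  · intro F hF u hu
    exact lemmaA F.toAddMonoidHom hF u hu
  · intro ι instFT K instFi instFin instAlg F hF u hu
    exact part2_aux (Fintype.card ι) ι rfl K (fun α => (F α : _ → _))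
      (fun α x y => map_add (F α) x y) hF u hu
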